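/- arXiv:1205.2446 — 3 statements merged into one kernel-verified Lean document; each statement's English description precedes it below -/
import Mathlib

section
/- Let Y, X₁, X₂ be real random variables (or finite data vectors) with least-squares multiple regression y = b₀ + b₁x₁ + b₂x₂ of Y on (X₁, X₂). Let c₁₂ be the slope of the simple least-squares regression of X₁ on X₂, and define X₁* = X₁ − c₁₂X₂. Then the slope a₁* of the simple least-squares regression of Y on X₁* satisfies a₁* = b₁. -/
open Finset Filter

/-- Sample mean of a data vector. -/
noncomputable def mean (p : ℕ) (x : Fin p → ℝ) : ℝ := (∑ i, x i) / (p : ℝ)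

/-- Sample covariance of two data vectors. -/
noncomputable def cov (p : ℕ) (x y : Fin p → ℝ) : ℝ :=
  (∑ i, (x i - mean p x) * (y i - mean p y)) / (p : ℝ)

/-- Sample variance of a data vector. -/
noncomputable def svar (p : ℕ) (x : Fin p → ℝ) : ℝ := cov p x x

/-- Slope of the simple least-squares regression of `y` on `x`. -/
noncomputable def regSlope (p : ℕ) (x y : Fin p → ℝ) : ℝ := cov p x y / svar p x

lemma quad_nonneg_zero (a c : ℝ) (hc : 0 ≤ c) (h : ∀ s : ℝ, 0 ≤ a * s + c * s ^ 2) :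
    a = 0 := by
  rcases eq_or_lt_of_le hc with h0 | h0
  · nlinarith [h (-a)]
  · have hs := h (-(a / (2 * c)))
    have heq : a * (-(a / (2 * c))) + c * (-(a / (2 * c))) ^ 2 = -a ^ 2 / (4 * c) := by
      field_simp; ring
    rw [heq] at hs
    have h4 : (0:ℝ) ≤ (4 * c) * (-a ^ 2 / (4 * c)) := mul_nonneg (by linarith) hs
    have h5 : (4 * c) * (-a ^ 2 / (4 * c)) = -a ^ 2 := by field_simp
    nlinarith [h4, h5]

lemma normal_eq (p : ℕ) (r x : Fin p → ℝ)
    (h : ∀ s : ℝ, ∑ i, (r i) ^ 2 ≤ ∑ i, (r i + s * x i) ^ 2) :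
    ∑ i, r i * x i = 0 := by
  have hexp : ∀ s : ℝ, ∑ i, (r i + s * x i) ^ 2
      = ∑ i, (r i) ^ 2 + (2 * ∑ i, r i * x i) * s + (∑ i, (x i) ^ 2) * s ^ 2 := by
    intro s
    rw [Finset.mul_sum, Finset.sum_mul, Finset.sum_mul, ← Finset.sum_add_distrib,
      ← Finset.sum_add_distrib]
    exact Finset.sum_congr rfl fun i _ => by ring
  have := quad_nonneg_zero (2 * ∑ i, r i * x i) (∑ i, (x i) ^ 2)
    (Finset.sum_nonneg fun i _ => sq_nonneg _)
    (fun s => by have hs := h s; rw [hexp s] at hs; linarith)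
  linarith

lemma cov_eq (p : ℕ) (hp : (p : ℝ) ≠ 0) (x y : Fin p → ℝ) :
    cov p x y = ((p : ℝ) * ∑ i, x i * y i - (∑ i, x i) * (∑ i, y i)) / (p : ℝ) ^ 2 := by
  unfold cov mean
  have h1 : ∑ i, (x i - (∑ j, x j) / (p:ℝ)) * (y i - (∑ j, y j) / (p:ℝ))
      = ∑ i, x i * y i - (∑ i, x i) * (∑ i, y i) / (p:ℝ) := by
    simp only [sub_mul, mul_sub]
    rw [Finset.sum_sub_distrib, Finset.sum_sub_distrib, Finset.sum_sub_distrib,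
      ← Finset.sum_mul, ← Finset.mul_sum]
    have hcard : ∑ _i : Fin p, ((∑ j, x j) / (p:ℝ)) * ((∑ j, y j) / (p:ℝ))
        = (p:ℝ) * (((∑ j, x j) / (p:ℝ)) * ((∑ j, y j) / (p:ℝ))) := by
      rw [Finset.sum_const, Finset.card_fin, nsmul_eq_mul]
    rw [hcard]
    field_simp
    ring
  rw [h1]
  field_simp

theorem multiple_eq_simple_on_adjusted_first
    (p : ℕ) (Y X1 X2 : Fin p → ℝ) (b0 b1 b2 : ℝ)
    (hBmin : ∀ t0 t1 t2 : ℝ,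
      ∑ i, (Y i - b0 - b1 * X1 i - b2 * X2 i)^2 ≤ ∑ i, (Y i - t0 - t1 * X1 i - t2 * X2 i)^2)
    (hBuniq : ∀ t0 t1 t2 : ℝ,
      ∑ i, (Y i - t0 - t1 * X1 i - t2 * X2 i)^2 ≤ ∑ i, (Y i - b0 - b1 * X1 i - b2 * X2 i)^2 →
      t0 = b0 ∧ t1 = b1 ∧ t2 = b2)
    (hv2 : svar p X2 ≠ 0)
    (hvstar : svar p (fun i => X1 i - regSlope p X2 X1 * X2 i) ≠ 0) :
    regSlope p (fun i => X1 i - regSlope p X2 X1 * X2 i) Y = b1 := by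
  have hp : (p : ℝ) ≠ 0 := by
    intro h
    apply hv2
    have hp0 : p = 0 := Nat.cast_eq_zero.mp h
    subst hp0
    simp [svar, cov]
  set c := regSlope p X2 X1 with hcdef
  set r : Fin p → ℝ := fun i => Y i - b0 - b1 * X1 i - b2 * X2 i with hrdef
  -- normal equations
  have N0 : ∑ i, r i * (1:ℝ) = 0 := by
    apply normal_eq p r (fun _ => (1:ℝ))
    intro s
    have h := hBmin (b0 - s) b1 b2
    refine le_trans h (le_of_eq ?_)
    refine Finset.sum_congr rfl fun i _ => ?_
    simp only [hrdef]
    ring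
  have N1 : ∑ i, r i * X1 i = 0 := by
    apply normal_eq p r X1
    intro s
    have h := hBmin b0 (b1 - s) b2
    refine le_trans h (le_of_eq ?_)
    refine Finset.sum_congr rfl fun i _ => ?_
    simp only [hrdef]
    ring
  have N2 : ∑ i, r i * X2 i = 0 := by
    apply normal_eq p r X2
    intro s
    have h := hBmin b0 b1 (b2 - s)
    refine le_trans h (le_of_eq ?_)
    refine Finset.sum_congr rfl fun i _ => ?_
    simp only [hrdef]
    ring
  -- expanded normal equations
  have S0 : ∑ i, Y i = (p:ℝ) * b0 + b1 * ∑ i, X1 i + b2 * ∑ i, X2 i := by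
    have e : ∑ i, r i * (1:ℝ)
        = ∑ i, Y i - ((p:ℝ) * b0 + b1 * ∑ i, X1 i + b2 * ∑ i, X2 i) := by
      rw [Finset.mul_sum, Finset.mul_sum]
      rw [show (p:ℝ) * b0 = ∑ _i : Fin p, b0 by
        rw [Finset.sum_const, Finset.card_fin, nsmul_eq_mul]]
      rw [← Finset.sum_add_distrib, ← Finset.sum_add_distrib, ← Finset.sum_sub_distrib]
      exact Finset.sum_congr rfl fun i _ => by simp only [hrdef]; ring
    rw [e] at N0
    linarith
  have S1 : ∑ i, X1 i * Y i
      = b0 * ∑ i, X1 i + b1 * ∑ i, X1 i * X1 i + b2 * ∑ i, X1 i * X2 i := by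
    have e : ∑ i, r i * X1 i
        = ∑ i, X1 i * Y i
          - (b0 * ∑ i, X1 i + b1 * ∑ i, X1 i * X1 i + b2 * ∑ i, X1 i * X2 i) := by
      rw [Finset.mul_sum, Finset.mul_sum, Finset.mul_sum]
      rw [← Finset.sum_add_distrib, ← Finset.sum_add_distrib, ← Finset.sum_sub_distrib]
      exact Finset.sum_congr rfl fun i _ => by simp only [hrdef]; ring
    rw [e] at N1
    linarith
  have S2 : ∑ i, X2 i * Y i
      = b0 * ∑ i, X2 i + b1 * ∑ i, X1 i * X2 i + b2 * ∑ i, X2 i * X2 i := by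
    have e : ∑ i, r i * X2 i
        = ∑ i, X2 i * Y i
          - (b0 * ∑ i, X2 i + b1 * ∑ i, X1 i * X2 i + b2 * ∑ i, X2 i * X2 i) := by
      rw [Finset.mul_sum, Finset.mul_sum, Finset.mul_sum]
      rw [← Finset.sum_add_distrib, ← Finset.sum_add_distrib, ← Finset.sum_sub_distrib]
      exact Finset.sum_congr rfl fun i _ => by simp only [hrdef]; ring
    rw [e] at N2
    linarith
  -- property of c
  have hc' : c * svar p X2 = cov p X2 X1 := by
    rw [hcdef]
    exact div_mul_cancel₀ _ hv2
  unfold svar at hc'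
  rw [cov_eq p hp, cov_eq p hp] at hc'
  have comm21 : ∑ i, X2 i * X1 i = ∑ i, X1 i * X2 i :=
    Finset.sum_congr rfl fun i _ => mul_comm _ _
  rw [comm21] at hc'
  have hc2 : c * ((p:ℝ) * ∑ i, X2 i * X2 i - (∑ i, X2 i) ^ 2)
      = (p:ℝ) * ∑ i, X1 i * X2 i - (∑ i, X2 i) * (∑ i, X1 i) := by
    have h2 := hc'
    field_simp at h2
    have e2 : ∑ i, X2 i * X2 i = ∑ i, X2 i ^ 2 := Finset.sum_congr rfl fun i _ => by ring
    linear_combination h2 + (c * (p:ℝ)) * e2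
  -- main goal
  have hvstar' : cov p (fun i => X1 i - c * X2 i) (fun i => X1 i - c * X2 i) ≠ 0 := hvstar
  unfold regSlope svar
  rw [div_eq_iff hvstar', cov_eq p hp, cov_eq p hp]
  have sA : ∑ i, (X1 i - c * X2 i) = ∑ i, X1 i - c * ∑ i, X2 i := by
    rw [Finset.mul_sum, ← Finset.sum_sub_distrib]
  have sY : ∑ i, (X1 i - c * X2 i) * Y i
      = ∑ i, X1 i * Y i - c * ∑ i, X2 i * Y i := by
    rw [Finset.mul_sum, ← Finset.sum_sub_distrib]
    exact Finset.sum_congr rfl fun i _ => by ring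
  have sXX : ∑ i, (X1 i - c * X2 i) * (X1 i - c * X2 i)
      = ∑ i, X1 i * X1 i - 2 * c * ∑ i, X1 i * X2 i + c * c * ∑ i, X2 i * X2 i := by
    rw [Finset.mul_sum, Finset.mul_sum, ← Finset.sum_sub_distrib, ← Finset.sum_add_distrib]
    exact Finset.sum_congr rfl fun i _ => by ring
  have eA : ∑ i, X2 i * X2 i = ∑ i, X2 i ^ 2 := Finset.sum_congr rfl fun i _ => by ring
  have eB : ∑ i, X1 i * X1 i = ∑ i, X1 i ^ 2 := Finset.sum_congr rfl fun i _ => by ring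

  rw [sA, sY, sXX]
  field_simp
  linear_combination (p:ℝ) * S1 - c * (p:ℝ) * S2
    - ((∑ i, X1 i) - c * (∑ i, X2 i)) * S0 - (b1 * c + b2) * hc2
    + ((p:ℝ) * c ^ 2 * b1) * eA + ((p:ℝ) * b1) * eB
end

section
/- Let b₁, b₂ be the multiple regression coefficients of Y on (X₁, X₂) with b₁ ≠ 0, c₁₂ the simple regression slope of X₁ on X₂, and a₁*(γ) the slope of the simple regression of Y on X₁ − γX₂ as a function of γ. Then the equation a₁*(γ) = b₁ has exactly the two solutions γ₁ = c₁₂ and γ₂ = −b₂/b₁ (these coincide when b₂ = −b₁c₁₂). -/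
open Finset Filter

private lemma cov_scaled (p : ℕ) (hp : (p : ℝ) ≠ 0) (x y : Fin p → ℝ) :
    cov p x y * (p : ℝ) ^ 2 = (p : ℝ) * (∑ i, x i * y i) - (∑ i, x i) * (∑ i, y i) := by
  have h : ∀ i : Fin p, (x i - mean p x) * (y i - mean p y)
      = x i * y i - mean p x * y i - mean p y * x i + mean p x * mean p y := fun i => by ring
  rw [cov]
  rw [Finset.sum_congr rfl fun i _ => h i]
  rw [Finset.sum_add_distrib, Finset.sum_sub_distrib, Finset.sum_sub_distrib,
    ← Finset.mul_sum, ← Finset.mul_sum, Finset.sum_const, Finset.card_univ,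
    Fintype.card_fin, nsmul_eq_mul]
  simp only [mean]
  field_simp
  ring

theorem slope_equation_two_solutions
    (p : ℕ) (Y X1 X2 : Fin p → ℝ) (b0 b1 b2 : ℝ)
    (hBmin : ∀ t0 t1 t2 : ℝ,
      ∑ i, (Y i - b0 - b1 * X1 i - b2 * X2 i)^2 ≤ ∑ i, (Y i - t0 - t1 * X1 i - t2 * X2 i)^2)
    (hBuniq : ∀ t0 t1 t2 : ℝ,
      ∑ i, (Y i - t0 - t1 * X1 i - t2 * X2 i)^2 ≤ ∑ i, (Y i - b0 - b1 * X1 i - b2 * X2 i)^2 →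
      t0 = b0 ∧ t1 = b1 ∧ t2 = b2)
    (hv1 : svar p X1 ≠ 0) (hv2 : svar p X2 ≠ 0)
    (hr : (cov p X1 X2)^2 ≠ svar p X1 * svar p X2)
    (hb1 : b1 ≠ 0) :
    ∀ γ : ℝ, (cov p X1 Y - γ * cov p X2 Y) / (svar p X1 - 2 * γ * cov p X1 X2 + γ^2 * svar p X2) = b1 ↔
      (γ = regSlope p X2 X1 ∨ γ = -(b2 / b1)) := by
  -- p is positive
  have hp0 : p ≠ 0 := by
    intro h
    apply hv1
    subst h
    simp [svar, cov]
  have hp : (p : ℝ) ≠ 0 := Nat.cast_ne_zero.mpr hp0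
  have hpp : (0 : ℝ) < p := by positivity
  -- gradient conditions: the residuals are orthogonal to any perturbation direction
  have key : ∀ d : Fin p → ℝ,
      (∀ s : ℝ, ∑ i, (Y i - b0 - b1 * X1 i - b2 * X2 i) ^ 2
        ≤ ∑ i, ((Y i - b0 - b1 * X1 i - b2 * X2 i) - s * d i) ^ 2) →
      ∑ i, (Y i - b0 - b1 * X1 i - b2 * X2 i) * d i = 0 := by
    intro d hmin
    set A := ∑ i, (Y i - b0 - b1 * X1 i - b2 * X2 i) * d i with hA
    set B := ∑ i, d i ^ 2 with hB
    have hBnn : 0 ≤ B := Finset.sum_nonneg fun i _ => sq_nonneg _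
    have hexp : ∀ s : ℝ, ∑ i, ((Y i - b0 - b1 * X1 i - b2 * X2 i) - s * d i) ^ 2
        = (∑ i, (Y i - b0 - b1 * X1 i - b2 * X2 i) ^ 2) - 2 * s * A + s ^ 2 * B := by
      intro s
      rw [hA, hB, Finset.mul_sum, Finset.mul_sum, ← Finset.sum_sub_distrib,
        ← Finset.sum_add_distrib]
      exact Finset.sum_congr rfl fun i _ => by ring
    have h1 := hmin (A / (B + 1))
    rw [hexp] at h1
    have hB1 : (0 : ℝ) < B + 1 := by linarith
    have h2 : 0 ≤ -2 * (A / (B + 1)) * A + (A / (B + 1)) ^ 2 * B := by linarith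
    have h3 : 0 ≤ (-2 * (A / (B + 1)) * A + (A / (B + 1)) ^ 2 * B) * (B + 1) ^ 2 :=
      mul_nonneg h2 (by positivity)
    have h4 : (-2 * (A / (B + 1)) * A + (A / (B + 1)) ^ 2 * B) * (B + 1) ^ 2
        = -A ^ 2 * (B + 2) := by field_simp; ring
    nlinarith [sq_nonneg A]
  -- the three normal equations in raw form
  have n0 : ∑ i, (Y i - b0 - b1 * X1 i - b2 * X2 i) = 0 := by
    have h := key (fun _ => 1) (fun s => by
      have h := hBmin (b0 + s) b1 b2
      calc ∑ i, (Y i - b0 - b1 * X1 i - b2 * X2 i) ^ 2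
          ≤ ∑ i, (Y i - (b0 + s) - b1 * X1 i - b2 * X2 i) ^ 2 := h
        _ = ∑ i, ((Y i - b0 - b1 * X1 i - b2 * X2 i) - s * (fun _ : Fin p => (1:ℝ)) i) ^ 2 :=
            Finset.sum_congr rfl fun i _ => by simp; ring)
    simpa using h
  have n1 : ∑ i, (Y i - b0 - b1 * X1 i - b2 * X2 i) * X1 i = 0 := by
    refine key X1 (fun s => ?_)
    calc ∑ i, (Y i - b0 - b1 * X1 i - b2 * X2 i) ^ 2
        ≤ ∑ i, (Y i - b0 - (b1 + s) * X1 i - b2 * X2 i) ^ 2 := hBmin b0 (b1 + s) b2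
      _ = ∑ i, ((Y i - b0 - b1 * X1 i - b2 * X2 i) - s * X1 i) ^ 2 :=
          Finset.sum_congr rfl fun i _ => by ring
  have n2 : ∑ i, (Y i - b0 - b1 * X1 i - b2 * X2 i) * X2 i = 0 := by
    refine key X2 (fun s => ?_)
    calc ∑ i, (Y i - b0 - b1 * X1 i - b2 * X2 i) ^ 2
        ≤ ∑ i, (Y i - b0 - b1 * X1 i - (b2 + s) * X2 i) ^ 2 := hBmin b0 b1 (b2 + s)
      _ = ∑ i, ((Y i - b0 - b1 * X1 i - b2 * X2 i) - s * X2 i) ^ 2 :=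
          Finset.sum_congr rfl fun i _ => by ring
  -- expand the raw normal equations into sums
  have n0' : (∑ i, Y i) - (p : ℝ) * b0 - b1 * (∑ i, X1 i) - b2 * (∑ i, X2 i) = 0 := by
    rw [← n0, Finset.mul_sum, Finset.mul_sum,
      show ((p : ℝ) * b0) = ∑ _i : Fin p, b0 by
        simp [Finset.sum_const, Finset.card_univ, mul_comm],
      ← Finset.sum_sub_distrib, ← Finset.sum_sub_distrib, ← Finset.sum_sub_distrib]
  have n1' : (∑ i, X1 i * Y i) - b0 * (∑ i, X1 i) - b1 * (∑ i, X1 i * X1 i)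
      - b2 * (∑ i, X1 i * X2 i) = 0 := by
    rw [← n1, Finset.mul_sum, Finset.mul_sum, Finset.mul_sum,
      ← Finset.sum_sub_distrib, ← Finset.sum_sub_distrib, ← Finset.sum_sub_distrib]
    exact Finset.sum_congr rfl fun i _ => by ring
  have n2' : (∑ i, X2 i * Y i) - b0 * (∑ i, X2 i) - b1 * (∑ i, X1 i * X2 i)
      - b2 * (∑ i, X2 i * X2 i) = 0 := by
    rw [← n2, Finset.mul_sum, Finset.mul_sum, Finset.mul_sum,
      ← Finset.sum_sub_distrib, ← Finset.sum_sub_distrib, ← Finset.sum_sub_distrib]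
    exact Finset.sum_congr rfl fun i _ => by ring
  -- covariance-form normal equations
  have e1 : cov p X1 Y = b1 * svar p X1 + b2 * cov p X1 X2 := by
    have hc : cov p X1 Y * (p : ℝ) ^ 2
        = (b1 * svar p X1 + b2 * cov p X1 X2) * (p : ℝ) ^ 2 := by
      rw [svar]
      have h1 := cov_scaled p hp X1 Y
      have h2 := cov_scaled p hp X1 X1
      have h3 := cov_scaled p hp X1 X2
      linear_combination h1 - b1 * h2 - b2 * h3 + (p : ℝ) * n1' - (∑ i, X1 i) * n0'
    exact mul_right_cancel₀ (pow_ne_zero 2 hp) hc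
  have e2 : cov p X2 Y = b1 * cov p X1 X2 + b2 * svar p X2 := by
    have hc : cov p X2 Y * (p : ℝ) ^ 2
        = (b1 * cov p X1 X2 + b2 * svar p X2) * (p : ℝ) ^ 2 := by
      rw [svar]
      have h1 := cov_scaled p hp X2 Y
      have h2 := cov_scaled p hp X1 X2
      have h3 := cov_scaled p hp X2 X2
      linear_combination h1 - b1 * h2 - b2 * h3 + (p : ℝ) * n2' - (∑ i, X2 i) * n0'
    exact mul_right_cancel₀ (pow_ne_zero 2 hp) hc
  -- variances are positive, and strict Cauchy–Schwarz
  have hv2nn : 0 ≤ svar p X2 := by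
    rw [svar, cov]
    apply div_nonneg _ (le_of_lt hpp)
    exact Finset.sum_nonneg fun i _ => mul_self_nonneg _
  have hv2pos : 0 < svar p X2 := lt_of_le_of_ne hv2nn (Ne.symm hv2)
  have hcs : (cov p X1 X2) ^ 2 < svar p X1 * svar p X2 := by
    have h := Finset.sum_mul_sq_le_sq_mul_sq Finset.univ
      (fun i => X1 i - mean p X1) (fun i => X2 i - mean p X2)
    have h2 : (cov p X1 X2) ^ 2 ≤ svar p X1 * svar p X2 := by
      rw [svar, svar, cov, cov, cov, div_pow, div_mul_div_comm,
        show ((p : ℝ) * p) = (p : ℝ) ^ 2 by ring]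
      rw [div_le_div_iff_of_pos_right (by positivity)]
      calc (∑ i, (X1 i - mean p X1) * (X2 i - mean p X2)) ^ 2
          ≤ (∑ i, (X1 i - mean p X1) ^ 2) * (∑ i, (X2 i - mean p X2) ^ 2) := h
        _ = (∑ i, (X1 i - mean p X1) * (X1 i - mean p X1))
            * (∑ i, (X2 i - mean p X2) * (X2 i - mean p X2)) := by
            congr 1 <;> exact Finset.sum_congr rfl fun i _ => sq _
    exact lt_of_le_of_ne h2 hr
  intro γ
  -- the denominator is always positive
  have hD : 0 < svar p X1 - 2 * γ * cov p X1 X2 + γ ^ 2 * svar p X2 := by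
    nlinarith [sq_nonneg (svar p X2 * γ - cov p X1 X2), hv2pos, hcs]
  have hDne : svar p X1 - 2 * γ * cov p X1 X2 + γ ^ 2 * svar p X2 ≠ 0 := ne_of_gt hD
  -- factorization of the key polynomial
  have hfac : cov p X1 Y - γ * cov p X2 Y
      - b1 * (svar p X1 - 2 * γ * cov p X1 X2 + γ ^ 2 * svar p X2)
      = (b2 + γ * b1) * (cov p X1 X2 - γ * svar p X2) := by
    rw [e1, e2]; ring
  have hcovsymm : cov p X2 X1 = cov p X1 X2 := by
    rw [cov, cov]
    congr 1
    exact Finset.sum_congr rfl fun i _ => by ring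
  constructor
  · intro h
    rw [div_eq_iff hDne] at h
    have hz : (b2 + γ * b1) * (cov p X1 X2 - γ * svar p X2) = 0 := by
      rw [← hfac]; linarith
    rcases mul_eq_zero.mp hz with h1 | h1
    · right
      field_simp
      linarith
    · left
      rw [regSlope, hcovsymm, eq_div_iff hv2]
      linarith
  · intro h
    rw [div_eq_iff hDne]
    have hz : (b2 + γ * b1) * (cov p X1 X2 - γ * svar p X2) = 0 := by
      rcases h with h | h
      · apply mul_eq_zero_of_right
        rw [regSlope, hcovsymm] at h
        rw [h]
        field_simp
        ring
      · apply mul_eq_zero_of_left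
        rw [h]
        field_simp
        ring
    linarith [hfac, hz]
end

section
/- Omitted-variable / aggregation theorem: let y = b₀ + Σᵢ₌₁ᵏ bᵢxᵢ be the least-squares regression of Y on X₁,…,X_k. Fix a subset {X_{i₁},…,X_{i_m}} and for each i let xᵢ = cᵢ₀ + Σⱼ₌₁ᵐ c_{i,iⱼ} x_{iⱼ} be the least-squares regression of Xᵢ on the subset (with c_{i,iⱼ} = δ_{i,iⱼ} and cᵢ₀ = 0 when i is itself in the subset). If y = a₀ + Σⱼ₌₁ᵐ a_{iⱼ} x_{iⱼ} is the least-squares regression of Y on the subset, then a_{iⱼ} = Σᵢ₌₁ᵏ bᵢ c_{i,iⱼ} for each j. -/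
open Finset Filter

lemma ortho_of_min {p : ℕ} (r v : Fin p → ℝ)
    (h : ∀ ε : ℝ, ∑ s, (r s)^2 ≤ ∑ s, (r s - ε * v s)^2) :
    ∑ s, r s * v s = 0 := by
  set A := ∑ s, r s * v s with hA
  set B := ∑ s, (v s)^2 with hBdef
  have hB : 0 ≤ B := Finset.sum_nonneg fun s _ => sq_nonneg _
  have hq : ∀ ε : ℝ, 0 ≤ ε^2 * B - 2 * ε * A := by
    intro ε
    have h1 := h ε
    have expand : ∑ s, (r s - ε * v s)^2
        = ∑ s, (r s)^2 - 2 * ε * A + ε^2 * B := by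
      rw [hA, hBdef, Finset.mul_sum, Finset.mul_sum, ← Finset.sum_sub_distrib,
        ← Finset.sum_add_distrib]
      exact Finset.sum_congr rfl fun s _ => by ring
    rw [expand] at h1
    linarith
  have hB1 : (0:ℝ) < B + 1 := by linarith
  have h2 := hq (A / (B + 1))
  have hrw : (A/(B+1))^2 * B - 2*(A/(B+1))*A = (A^2*B - 2*A^2*(B+1))/(B+1)^2 := by
    field_simp
  rw [hrw] at h2
  have h4 : 0 ≤ A^2*B - 2*A^2*(B+1) := by
    have h5 := mul_nonneg h2 (sq_nonneg (B+1))
    rwa [div_mul_cancel₀] at h5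
    positivity
  have h6 : A^2 ≤ 0 := by nlinarith [hB]
  exact sq_eq_zero_iff.mp (le_antisymm h6 (sq_nonneg A))

lemma min_ortho {n p : ℕ} (Z : Fin p → ℝ) (W : Fin n → Fin p → ℝ) (b0 : ℝ) (b : Fin n → ℝ)
    (hmin : ∀ (t0 : ℝ) (t : Fin n → ℝ),
      ∑ s, (Z s - b0 - ∑ j, b j * W j s)^2 ≤ ∑ s, (Z s - t0 - ∑ j, t j * W j s)^2) :
    (∑ s, (Z s - b0 - ∑ j, b j * W j s)) = 0 ∧
    ∀ i, ∑ s, (Z s - b0 - ∑ j, b j * W j s) * W i s = 0 := by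
  set r : Fin p → ℝ := fun s => Z s - b0 - ∑ j, b j * W j s with hr
  constructor
  · have h0 : ∑ s, r s * (1:ℝ) = 0 := by
      apply ortho_of_min
      intro ε
      have h1 := hmin (b0 + ε) b
      have e1 : ∑ s, (Z s - (b0 + ε) - ∑ j, b j * W j s)^2 = ∑ s, (r s - ε * 1)^2 :=
        Finset.sum_congr rfl fun s _ => by simp [hr]; ring
      rw [e1] at h1
      exact h1
    simpa using h0
  · intro i
    apply ortho_of_min
    intro ε
    have h1 := hmin b0 (fun j => b j + ε * (if j = i then 1 else 0))
    have e1 : ∀ s, ∑ j, (b j + ε * (if j = i then 1 else 0)) * W j s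
        = (∑ j, b j * W j s) + ε * W i s := by
      intro s
      rw [Finset.sum_congr rfl (g := fun j => b j * W j s + (if j = i then ε * W j s else 0))
        (fun j _ => by split <;> simp_all <;> ring)]
      rw [Finset.sum_add_distrib, Finset.sum_ite_eq' univ i (fun j => ε * W j s)]
      simp
    have e2 : ∑ s, (Z s - b0 - ∑ j, (b j + ε * (if j = i then 1 else 0)) * W j s)^2
        = ∑ s, (r s - ε * W i s)^2 :=
      Finset.sum_congr rfl fun s _ => by rw [e1]; simp [hr]; ring
    rw [e2] at h1
    exact h1

theorem aggregation_theorem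
    (p k m : ℕ) (Y : Fin p → ℝ) (X : Fin k → Fin p → ℝ)
    (ι : Fin m → Fin k) (hι : Function.Injective ι)
    (b0 : ℝ) (b : Fin k → ℝ)
    (hBmin : ∀ (t0 : ℝ) (t : Fin k → ℝ),
      ∑ i, (Y i - b0 - ∑ j, b j * X j i)^2 ≤ ∑ i, (Y i - t0 - ∑ j, t j * X j i)^2)
    (hBuniq : ∀ (t0 : ℝ) (t : Fin k → ℝ),
      ∑ i, (Y i - t0 - ∑ j, t j * X j i)^2 ≤ ∑ i, (Y i - b0 - ∑ j, b j * X j i)^2 →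
      t0 = b0 ∧ t = b)
    (c0 : Fin k → ℝ) (c : Fin k → Fin m → ℝ)
    (hCmin : ∀ (i : Fin k) (t0 : ℝ) (t : Fin m → ℝ),
      ∑ s, (X i s - c0 i - ∑ j, c i j * X (ι j) s)^2 ≤
        ∑ s, (X i s - t0 - ∑ j, t j * X (ι j) s)^2)
    (hCuniq : ∀ (i : Fin k) (t0 : ℝ) (t : Fin m → ℝ),
      ∑ s, (X i s - t0 - ∑ j, t j * X (ι j) s)^2 ≤
        ∑ s, (X i s - c0 i - ∑ j, c i j * X (ι j) s)^2 →
      t0 = c0 i ∧ t = c i)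
    (hdelta : ∀ (j0 : Fin m), c0 (ι j0) = 0 ∧ ∀ j, c (ι j0) j = if j = j0 then 1 else 0)
    (a0 : ℝ) (a : Fin m → ℝ)
    (hAmin : ∀ (t0 : ℝ) (t : Fin m → ℝ),
      ∑ i, (Y i - a0 - ∑ j, a j * X (ι j) i)^2 ≤
        ∑ i, (Y i - t0 - ∑ j, t j * X (ι j) i)^2)
    (hAuniq : ∀ (t0 : ℝ) (t : Fin m → ℝ),
      ∑ i, (Y i - t0 - ∑ j, t j * X (ι j) i)^2 ≤
        ∑ i, (Y i - a0 - ∑ j, a j * X (ι j) i)^2 →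
      t0 = a0 ∧ t = a) :
    ∀ j : Fin m, a j = ∑ i, b i * c i j := by
  -- residuals
  set e : Fin p → ℝ := fun s => Y s - b0 - ∑ j, b j * X j s with he
  set u : Fin k → Fin p → ℝ :=
    fun i s => X i s - c0 i - ∑ j, c i j * X (ι j) s with hu
  obtain ⟨hE0, hEX⟩ := min_ortho Y X b0 b hBmin
  have hU : ∀ i : Fin k, (∑ s, u i s) = 0 ∧ ∀ j, ∑ s, u i s * X (ι j) s = 0 :=
    fun i => min_ortho (X i) (fun j => X (ι j)) (c0 i) (c i) (hCmin i)
  -- aggregated candidate coefficients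
  set T0 : ℝ := b0 + ∑ i, b i * c0 i with hT0
  set T : Fin m → ℝ := fun j => ∑ i, b i * c i j with hT
  set R : Fin p → ℝ := fun s => Y s - T0 - ∑ j, T j * X (ι j) s with hR
  have hRdecomp : ∀ s, R s = e s + ∑ i, b i * u i s := by
    intro s
    simp only [hR, hT0, hT, he, hu]
    have swap : ∑ j, (∑ i, b i * c i j) * X (ι j) s
        = ∑ i, b i * ∑ j, c i j * X (ι j) s := by
      calc ∑ j, (∑ i, b i * c i j) * X (ι j) s
          = ∑ j, ∑ i, b i * c i j * X (ι j) s := by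
            exact Finset.sum_congr rfl fun j _ => by rw [Finset.sum_mul]
        _ = ∑ i, ∑ j, b i * c i j * X (ι j) s := Finset.sum_comm
        _ = ∑ i, b i * ∑ j, c i j * X (ι j) s := by
            exact Finset.sum_congr rfl fun i _ => by
              rw [Finset.mul_sum]
              exact Finset.sum_congr rfl fun j _ => by ring
    have expand : ∑ i, b i * (X i s - c0 i - ∑ j, c i j * X (ι j) s)
        = ∑ i, b i * X i s - ∑ i, b i * c0 i
          - ∑ i, b i * (∑ j, c i j * X (ι j) s) := by
      rw [← Finset.sum_sub_distrib, ← Finset.sum_sub_distrib]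
      exact Finset.sum_congr rfl fun i _ => by ring
    rw [swap, expand]
    ring
  have hE0' : ∑ s, e s = 0 := hE0
  have hEX' : ∀ i, ∑ s, e s * X i s = 0 := hEX
  have hR0 : ∑ s, R s = 0 := by
    rw [Finset.sum_congr rfl fun s _ => hRdecomp s, Finset.sum_add_distrib, hE0',
      Finset.sum_comm]
    rw [Finset.sum_eq_zero fun i _ => by rw [← Finset.mul_sum, (hU i).1, mul_zero]]
    ring
  have hRX : ∀ j, ∑ s, R s * X (ι j) s = 0 := by
    intro j
    have step : ∀ s, R s * X (ι j) s
        = e s * X (ι j) s + ∑ i, b i * (u i s * X (ι j) s) := by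
      intro s
      rw [hRdecomp s, add_mul, Finset.sum_mul]
      congr 1
      exact Finset.sum_congr rfl fun i _ => by ring
    rw [Finset.sum_congr rfl fun s _ => step s, Finset.sum_add_distrib, hEX' (ι j),
      Finset.sum_comm]
    rw [Finset.sum_eq_zero fun i _ => by
      rw [← Finset.mul_sum, (hU i).2 j, mul_zero]]
    ring
  have hTmin : ∀ (t0 : ℝ) (t : Fin m → ℝ),
      ∑ s, R s ^ 2 ≤ ∑ s, (Y s - t0 - ∑ j, t j * X (ι j) s)^2 := by
    intro t0 t
    have decomp : ∀ s, Y s - t0 - ∑ j, t j * X (ι j) s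
        = R s + ((T0 - t0) + ∑ j, (T j - t j) * X (ι j) s) := by
      intro s
      have : ∑ j, (T j - t j) * X (ι j) s
          = ∑ j, T j * X (ι j) s - ∑ j, t j * X (ι j) s := by
        rw [← Finset.sum_sub_distrib]
        exact Finset.sum_congr rfl fun jj _ => by ring
      rw [this]
      simp only [hR]
      ring
    have cross : ∑ s, R s * ((T0 - t0) + ∑ j, (T j - t j) * X (ι j) s) = 0 := by
      have step : ∀ s, R s * ((T0 - t0) + ∑ j, (T j - t j) * X (ι j) s)
          = (T0 - t0) * R s + ∑ j, (T j - t j) * (R s * X (ι j) s) := by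
        intro s
        rw [mul_add, Finset.mul_sum]
        congr 1
        · ring
        · exact Finset.sum_congr rfl fun jj _ => by ring
      rw [Finset.sum_congr rfl fun s _ => step s, Finset.sum_add_distrib,
        ← Finset.mul_sum, hR0, mul_zero, Finset.sum_comm]
      rw [Finset.sum_eq_zero fun jj _ => by rw [← Finset.mul_sum, hRX jj, mul_zero]]
      ring
    have expand : ∑ s, (Y s - t0 - ∑ j, t j * X (ι j) s)^2
        = ∑ s, R s ^ 2
          + 2 * ∑ s, R s * ((T0 - t0) + ∑ j, (T j - t j) * X (ι j) s)
          + ∑ s, ((T0 - t0) + ∑ j, (T j - t j) * X (ι j) s)^2 := by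
      rw [Finset.mul_sum, ← Finset.sum_add_distrib, ← Finset.sum_add_distrib]
      exact Finset.sum_congr rfl fun s _ => by rw [decomp s]; ring
    have sq_nn : 0 ≤ ∑ s, ((T0 - t0) + ∑ j, (T j - t j) * X (ι j) s)^2 :=
      Finset.sum_nonneg fun s _ => sq_nonneg _
    rw [expand, cross]
    linarith
  have heq : T0 = a0 ∧ T = a := hAuniq T0 T (hTmin a0 a)
  intro j
  exact (congrFun heq.2 j).symm
end
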